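/- Let σ ⊆ ℝᵏ be a k-simplex, let p be a point in the interior of σ, and let τ be a convex subset of ∂σ with dim(span τ) ≤ k − 2 and p ∉ span(τ). Then the set of points v in the interior of σ for which p lies in the cone Cone_v(τ) = {tv + (1−t)x : x ∈ τ, t ∈ [0,1]} is contained in an affine subspace of ℝᵏ of dimension at most k − 1. -/

import Mathlib

open Set

/-- The cone over `τ` with cone point `v`: the union of segments from `v` to points of `τ`. -/
def coneOver {k : ℕ} (v : Fin k → ℝ) (τ : Set (Fin k → ℝ)) : Set (Fin k → ℝ) :=
  {y | ∃ x ∈ τ, ∃ t ∈ Set.Icc (0 : ℝ) 1, y = t • v + (1 - t) • x}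

/-- for a `k`-simplex `σ ⊆ ℝᵏ`, a point `p ∈ σ°`, and a convex subset `τ`
of `∂σ` whose affine span has dimension `≤ k - 2` and does not contain `p`, the set of
`v ∈ σ°` with `p ∈ Cone_v(τ)` lies in an affine subspace of dimension at most `k - 1`. -/
theorem cone_point_condition_codim_one {k : ℕ}
    (w : Fin (k + 1) → (Fin k → ℝ)) (hw : AffineIndependent ℝ w)
    (σ : Set (Fin k → ℝ)) (hσ : σ = convexHull ℝ (Set.range w))
    (p : Fin k → ℝ) (hp : p ∈ interior σ)
    (τ : Set (Fin k → ℝ)) (hτσ : τ ⊆ frontier σ) (hτconv : Convex ℝ τ)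
    (hτdim : (Module.finrank ℝ (affineSpan ℝ τ).direction : ℤ) ≤ (k : ℤ) - 2)
    (hpτ : p ∉ affineSpan ℝ τ) :
    ∃ A : AffineSubspace ℝ (Fin k → ℝ),
      (Module.finrank ℝ A.direction : ℤ) ≤ (k : ℤ) - 1 ∧
      {v ∈ interior σ | p ∈ coneOver v τ} ⊆ (A : Set (Fin k → ℝ)) := by
  rcases τ.eq_empty_or_nonempty with hτ | ⟨q, hq⟩
  · refine ⟨affineSpan ℝ {p}, ?_, ?_⟩
    · have h1 : (affineSpan ℝ ({p} : Set (Fin k → ℝ))).direction = ⊥ := by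
        simp [direction_affineSpan]
      have h0 : (0 : ℤ) ≤ (Module.finrank ℝ (affineSpan ℝ τ).direction : ℤ) :=
        Int.ofNat_nonneg _
      rw [h1]
      simp only [finrank_bot, Nat.cast_zero]
      omega
    · intro v hv
      rcases hv.2 with ⟨x, hx, _⟩
      simp [hτ] at hx
  · refine ⟨affineSpan ℝ (insert p τ), ?_, ?_⟩
    · have hle : (affineSpan ℝ (insert p τ)).direction ≤
        Submodule.span ℝ {p -ᵥ q} ⊔ (affineSpan ℝ τ).direction := by
        rw [← AffineSubspace.direction_affineSpan_insert (p₂ := p)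
          (mem_affineSpan ℝ hq)]
        apply AffineSubspace.direction_le
        apply affineSpan_mono
        exact Set.insert_subset_insert (subset_affineSpan ℝ τ)
      have h1 : Module.finrank ℝ (affineSpan ℝ (insert p τ)).direction ≤
          Module.finrank ℝ (Submodule.span ℝ {p -ᵥ q}) +
          Module.finrank ℝ (affineSpan ℝ τ).direction :=
        le_trans (Submodule.finrank_mono hle)
          (Submodule.finrank_add_le_finrank_add_finrank _ _)
      have h2 : Module.finrank ℝ (Submodule.span ℝ ({p -ᵥ q} : Set (Fin k → ℝ))) ≤ 1 := by
        by_cases h : p -ᵥ q = 0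
        · rw [h, Submodule.span_zero_singleton, finrank_bot]
          exact Nat.zero_le _
        · exact le_of_eq (finrank_span_singleton h)
      have := hτdim
      push_cast at *
      omega
    · rintro v ⟨-, x, hx, t, ⟨ht0, ht1⟩, heq⟩
      have hxA : x ∈ affineSpan ℝ (insert p τ) :=
        mem_affineSpan ℝ (Set.mem_insert_of_mem _ hx)
      have hpA : p ∈ affineSpan ℝ (insert p τ) :=
        mem_affineSpan ℝ (Set.mem_insert _ _)
      rcases eq_or_lt_of_le ht0 with ht | ht
      · exfalso
        apply hpτ
        have : p = x := by rw [heq, ← ht]; module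
        rw [this]
        exact mem_affineSpan ℝ hx
      · have hv : v = t⁻¹ • (p -ᵥ x) +ᵥ x := by
          have ht' : t ≠ 0 := ne_of_gt ht
          rw [heq]
          show v = t⁻¹ • ((t • v + (1 - t) • x) - x) + x
          match_scalars <;> field_simp <;> ring
        rw [hv]
        exact AffineSubspace.smul_vsub_vadd_mem _ t⁻¹ hpA hxA hxA
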